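/- Fix n ≥ 1 and λ ∈ ℝ, and define the two-slit real Hamiltonian H̃ : ℂ^n × ℂ^n × ℝ × ℝ → ℝ by H̃(a,q,u_1,u_2) = 2 Re[ ∑_{k=1}^{n} (−a − 2∑_{s=1}^{n−1} (λe^{−isu_1} + (1−λ)e^{−isu_2}) A(a)^s a)_k q_k ]. Let I ⊆ ℝ be an interval, let u_1, u_2 : I → ℝ be differentiable, and let a, q : I → ℂ^n be differentiable and satisfy the two-slit phase system a'(t) = −a(t) − 2∑_{s=1}^{n−1}(λe^{−isu_1(t)}+(1−λ)e^{−isu_2(t)}) A(a(t))^s a(t) and the two-slit adjoint system q'(t) = q(t) + 2∑_{s=1}^{n−1}(λe^{−isu_1(t)}+(1−λ)e^{−isu_2(t)})(s+1)(A(a(t))ᵀ)^s q(t). If ∂H̃/∂u_1 (a(t),q(t),u_1(t),u_2(t)) = 0 and ∂H̃/∂u_2 (a(t),q(t),u_1(t),u_2(t)) = 0 for all t ∈ I, then the function t ↦ H̃(a(t), q(t), u_1(t), u_2(t)) is constant on I. -/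

import Mathlib

open Complex

/-- The lower-triangular nilpotent Toeplitz matrix `A(a)` with `A(a)_{j,k} = a_{j-k}`
(1-indexed) for `j > k` and `0` otherwise. -/
noncomputable def toeplitzA {n : ℕ} (a : Fin n → ℂ) : Matrix (Fin n) (Fin n) ℂ :=
  Matrix.of fun j k =>
    if _ : (k : ℕ) < (j : ℕ) then a ⟨(j : ℕ) - (k : ℕ) - 1, by have := j.isLt; omega⟩ else 0

/-- The two-slit real Hamiltonian
`H̃(a,q,u₁,u₂) = 2 Re[∑_{k=1}^n (-a - 2∑_{s=1}^{n-1}(λe^{-isu₁}+(1-λ)e^{-isu₂})A(a)^s a)_k q_k]`. -/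
noncomputable def realHamTwo (n : ℕ) (lam : ℝ) (a q : Fin n → ℂ) (u₁ u₂ : ℝ) : ℝ :=
  2 * (∑ k : Fin n, (-(a k) - 2 * ∑ s ∈ Finset.Icc 1 (n - 1),
      ((lam : ℂ) * Complex.exp (-(s : ℂ) * (u₁ : ℂ) * Complex.I) +
       (1 - (lam : ℂ)) * Complex.exp (-(s : ℂ) * (u₂ : ℂ) * Complex.I)) *
        ((toeplitzA a ^ s).mulVec a) k) * q k).re

namespace TwoSlitAux
variable {n : ℕ}

/-! ### Algebraic structure of the Toeplitz matrices -/

noncomputable def pad (a : Fin n → ℂ) : ℕ → ℂ := fun m => if h : m < n then a ⟨m, h⟩ else 0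

lemma pad_coe (a : Fin n → ℂ) (k : Fin n) : pad a k = a k := by
  simp [pad, k.isLt]

lemma toeplitzA_apply (a : Fin n → ℂ) (j k : Fin n) :
    toeplitzA a j k = if (k : ℕ) < (j : ℕ) then pad a ((j : ℕ) - k - 1) else 0 := by
  by_cases h : (k : ℕ) < (j : ℕ)
  · have h2 : (j : ℕ) - k - 1 < n := by have := j.isLt; omega
    simp only [toeplitzA, Matrix.of_apply, dif_pos h, if_pos h, pad, dif_pos h2]
  · simp only [toeplitzA, Matrix.of_apply, dif_neg h, if_neg h]

lemma mulVec_apply (a b : Fin n → ℂ) (j : Fin n) :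
    (toeplitzA a).mulVec b j
      = ∑ m ∈ Finset.range (j : ℕ), pad a ((j : ℕ) - m - 1) * pad b m := by
  classical
  have h1 : (toeplitzA a).mulVec b j
      = ∑ k : Fin n, (fun m : ℕ => if m < (j : ℕ) then pad a ((j : ℕ) - m - 1) * pad b m else 0)
          (k : ℕ) := by
    unfold Matrix.mulVec dotProduct
    refine Finset.sum_congr rfl fun k _ => ?_
    show toeplitzA a j k * b k = _
    rw [toeplitzA_apply]
    by_cases h : (k : ℕ) < (j : ℕ) <;> simp [h, pad_coe]
  rw [h1, Fin.sum_univ_eq_sum_range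
    (fun m : ℕ => if m < (j : ℕ) then pad a ((j : ℕ) - m - 1) * pad b m else 0) n]
  rw [← Finset.sum_subset (Finset.range_subset_range.2 j.isLt.le)]
  · exact Finset.sum_congr rfl fun m hm => by simp [Finset.mem_range.1 hm]
  · intro m _ hm
    rw [if_neg (fun hc => hm (Finset.mem_range.2 hc))]

lemma mulVec_comm (a b : Fin n → ℂ) : (toeplitzA a).mulVec b = (toeplitzA b).mulVec a := by
  funext j
  rw [mulVec_apply, mulVec_apply, ← Finset.sum_range_reflect]
  refine Finset.sum_congr rfl fun m hm => ?_
  have hmj := Finset.mem_range.1 hm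
  rw [mul_comm]
  congr 2 <;> omega

lemma toeplitzA_mulVec_eq_mul (a b : Fin n → ℂ) :
    toeplitzA ((toeplitzA a).mulVec b) = toeplitzA a * toeplitzA b := by
  classical
  funext j k
  rw [toeplitzA_apply, Matrix.mul_apply]
  have hrhs : ∑ m : Fin n, toeplitzA a j m * toeplitzA b m k
      = ∑ m ∈ Finset.range n,
          (fun m : ℕ => if (k:ℕ) < m ∧ m < (j:ℕ) then
            pad a ((j:ℕ) - m - 1) * pad b (m - k - 1) else 0) m := by
    rw [← Fin.sum_univ_eq_sum_range
      (fun m : ℕ => if (k:ℕ) < m ∧ m < (j:ℕ) then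
        pad a ((j:ℕ) - m - 1) * pad b (m - k - 1) else 0) n]
    refine Finset.sum_congr rfl fun m _ => ?_
    rw [toeplitzA_apply, toeplitzA_apply]
    by_cases h1 : (m : ℕ) < (j : ℕ) <;> by_cases h2 : (k : ℕ) < (m : ℕ) <;>
      simp [h1, h2]
  rw [hrhs]
  by_cases h : (k : ℕ) < (j : ℕ)
  · rw [if_pos h]
    have hsub : Finset.Ico ((k:ℕ)+1) (j:ℕ) ⊆ Finset.range n := by
      intro m hm
      have := (Finset.mem_Ico.1 hm).2
      have := j.isLt
      exact Finset.mem_range.2 (by omega)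
    rw [← Finset.sum_subset hsub]
    · rw [Finset.sum_Ico_eq_sum_range]
      have hlt : (j:ℕ) - k - 1 < n := by have := j.isLt; omega
      rw [pad, dif_pos hlt, mulVec_apply]
      have hval : ((⟨(j:ℕ) - k - 1, hlt⟩ : Fin n) : ℕ) = (j:ℕ) - k - 1 := rfl
      rw [hval, show (j:ℕ) - ((k:ℕ)+1) = (j:ℕ) - k - 1 from by omega]
      refine Finset.sum_congr rfl fun i hi => ?_
      have hij := Finset.mem_range.1 hi
      have hcond : (k:ℕ) < (k:ℕ)+1+i ∧ (k:ℕ)+1+i < (j:ℕ) := by omega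
      rw [if_pos hcond]
      congr 2 <;> omega
    · intro m _ hm
      rw [Finset.mem_Ico] at hm
      rw [if_neg]; omega
  · rw [if_neg h]
    refine (Finset.sum_eq_zero fun m _ => ?_).symm
    rw [if_neg]; omega

lemma toeplitzA_comm (a b : Fin n → ℂ) :
    toeplitzA a * toeplitzA b = toeplitzA b * toeplitzA a := by
  rw [← toeplitzA_mulVec_eq_mul, ← toeplitzA_mulVec_eq_mul, mulVec_comm]

lemma toeplitzA_pow_mulVec (a : Fin n → ℂ) (s : ℕ) :
    toeplitzA ((toeplitzA a ^ s).mulVec a) = toeplitzA a ^ (s + 1) := by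
  induction s with
  | zero => simp [Matrix.one_mulVec]
  | succ s ih =>
    rw [pow_succ']
    rw [← Matrix.mulVec_mulVec, toeplitzA_mulVec_eq_mul, ih, ← pow_succ']

/-- transpose pairing. -/
lemma sum_mulVec_mul (M : Matrix (Fin n) (Fin n) ℂ) (x y : Fin n → ℂ) :
    ∑ k : Fin n, (M.mulVec x) k * y k = ∑ k : Fin n, x k * ((M.transpose).mulVec y) k := by
  simp only [Matrix.mulVec, dotProduct, Matrix.transpose_apply, Finset.sum_mul,
    Finset.mul_sum]
  rw [Finset.sum_comm]
  exact Finset.sum_congr rfl fun k _ => Finset.sum_congr rfl fun m _ => by ring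

/-! ### Derivatives of the matrix quantities -/

variable {I : Set ℝ} {t : ℝ} {f : ℝ → Fin n → ℂ} {f' : Fin n → ℂ}

lemma hasDeriv_toeplitz (hf : ∀ k, HasDerivWithinAt (fun u => f u k) (f' k) I t) (j k : Fin n) :
    HasDerivWithinAt (fun u => toeplitzA (f u) j k) (toeplitzA f' j k) I t := by
  unfold toeplitzA
  simp only [Matrix.of_apply]
  by_cases h : (k : ℕ) < (j : ℕ)
  · simp only [dif_pos h]; exact hf _
  · simp only [dif_neg h]; exact hasDerivWithinAt_const _ _ _

lemma hasDeriv_toeplitz_pow (hf : ∀ k, HasDerivWithinAt (fun u => f u k) (f' k) I t)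
    (s : ℕ) (j k : Fin n) :
    HasDerivWithinAt (fun u => (toeplitzA (f u) ^ (s + 1)) j k)
      (((s + 1) • (toeplitzA f' * toeplitzA (f t) ^ s)) j k) I t := by
  induction s generalizing j k with
  | zero =>
    simp only [zero_add, pow_one, one_smul, pow_zero, mul_one]
    exact hasDeriv_toeplitz hf j k
  | succ s ih =>
    have key : ∀ u, (toeplitzA (f u) ^ (s + 2)) j k
        = ∑ m : Fin n, toeplitzA (f u) j m * (toeplitzA (f u) ^ (s + 1)) m k := by
      intro u; rw [pow_succ']; exact Matrix.mul_apply
    simp only [key]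
    have step : HasDerivWithinAt
        (fun u => ∑ m : Fin n, toeplitzA (f u) j m * (toeplitzA (f u) ^ (s + 1)) m k)
        (∑ m : Fin n, (toeplitzA f' j m * (toeplitzA (f t) ^ (s + 1)) m k
          + toeplitzA (f t) j m * (((s + 1) • (toeplitzA f' * toeplitzA (f t) ^ s)) m k))) I t := by
      refine HasDerivWithinAt.fun_sum fun m _ => ?_
      exact (hasDeriv_toeplitz hf j m).mul (ih m k)
    convert step using 1
    rw [Finset.sum_add_distrib, ← Matrix.mul_apply, ← Matrix.mul_apply]
    have h1 : toeplitzA (f t) * ((s + 1) • (toeplitzA f' * toeplitzA (f t) ^ s))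
        = (s + 1) • (toeplitzA f' * toeplitzA (f t) ^ (s + 1)) := by
      rw [Matrix.mul_smul, ← mul_assoc, toeplitzA_comm, mul_assoc, ← pow_succ']
    rw [h1]
    have h2 : (s + 1 + 1) • (toeplitzA f' * toeplitzA (f t) ^ (s + 1))
        = toeplitzA f' * toeplitzA (f t) ^ (s + 1)
          + (s + 1) • (toeplitzA f' * toeplitzA (f t) ^ (s + 1)) := by
      rw [add_smul, one_smul, add_comm]
    rw [h2, Matrix.add_apply]

lemma hasDeriv_pow_mulVec (hf : ∀ k, HasDerivWithinAt (fun u => f u k) (f' k) I t)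
    (s : ℕ) (k : Fin n) :
    HasDerivWithinAt (fun u => (toeplitzA (f u) ^ (s + 1)).mulVec (f u) k)
      ((s + 2) • ((toeplitzA (f t) ^ (s + 1)).mulVec f') k) I t := by
  have key : ∀ u, (toeplitzA (f u) ^ (s + 1)).mulVec (f u) k
      = ∑ m : Fin n, (toeplitzA (f u) ^ (s + 1)) k m * f u m := fun u => rfl
  simp only [key]
  have step : HasDerivWithinAt
      (fun u => ∑ m : Fin n, (toeplitzA (f u) ^ (s + 1)) k m * f u m)
      (∑ m : Fin n, ((((s + 1) • (toeplitzA f' * toeplitzA (f t) ^ s)) k m) * f t m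
        + (toeplitzA (f t) ^ (s + 1)) k m * f' m)) I t := by
    refine HasDerivWithinAt.fun_sum fun m _ => ?_
    exact (hasDeriv_toeplitz_pow hf s k m).mul (hf m)
  convert step using 1
  rw [Finset.sum_add_distrib]
  have h1 : ∑ m : Fin n, (((s + 1) • (toeplitzA f' * toeplitzA (f t) ^ s)) k m) * f t m
      = ((s + 1) • (toeplitzA f' * toeplitzA (f t) ^ s)).mulVec (f t) k := rfl
  have h2 : ∑ m : Fin n, (toeplitzA (f t) ^ (s + 1)) k m * f' m
      = (toeplitzA (f t) ^ (s + 1)).mulVec f' k := rfl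
  rw [h1, h2]
  have h3 : ((s + 1) • (toeplitzA f' * toeplitzA (f t) ^ s)).mulVec (f t)
      = (s + 1) • (toeplitzA (f t) ^ (s + 1)).mulVec f' := by
    rw [Matrix.smul_mulVec, ← Matrix.mulVec_mulVec, mulVec_comm,
      toeplitzA_pow_mulVec]
  rw [h3, Pi.smul_apply, show s + 2 = (s + 1) + 1 from rfl, succ_nsmul]

/-! ### Derivatives of the exponentials and the partial derivatives in `u₁`, `u₂` -/

lemma hasDeriv_cexp {u : ℝ → ℝ} {d : ℝ} (hu : HasDerivWithinAt u d I t) (s : ℕ) :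
    HasDerivWithinAt (fun r => Complex.exp (-(s : ℂ) * (u r : ℂ) * Complex.I))
      ((d : ℂ) * (-(s : ℂ) * Complex.I) * Complex.exp (-(s : ℂ) * (u t : ℂ) * Complex.I)) I t := by
  have h0 : HasDerivWithinAt (fun r => ((u r : ℝ) : ℂ)) (d : ℂ) I t := by
    have := Complex.ofRealCLM.hasFDerivAt.comp_hasDerivWithinAt t hu
    simpa [Function.comp_def] using this
  have h1 : HasDerivWithinAt (fun r => -(s : ℂ) * (u r : ℂ) * Complex.I)
      ((d : ℂ) * (-(s : ℂ) * Complex.I)) I t := by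
    have := (h0.const_mul (-(s : ℂ))).mul_const Complex.I
    refine this.congr_deriv (Eq.symm ?_)
    ring
  have := h1.cexp
  convert this using 1
  ring

lemma hasDerivAt_cexp_v (s : ℕ) (v : ℝ) :
    HasDerivAt (fun w : ℝ => Complex.exp (-(s : ℂ) * (w : ℂ) * Complex.I))
      ((-(s : ℂ) * Complex.I) * Complex.exp (-(s : ℂ) * (v : ℂ) * Complex.I)) v := by
  have h := (hasDeriv_cexp (u := id) (d := 1) (I := Set.univ) (t := v)
    (hasDerivAt_id v).hasDerivWithinAt s)
  rw [hasDerivWithinAt_univ] at h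
  simpa using h

lemma hasDerivAt_H_u₁ (n : ℕ) (lam : ℝ) (A Q : Fin n → ℂ) (v w : ℝ) :
    HasDerivAt (fun v => realHamTwo n lam A Q v w)
      (2 * (∑ k : Fin n, (-(2:ℂ) * ∑ s ∈ Finset.Icc 1 (n - 1),
        (lam : ℂ) * ((-(s : ℂ) * Complex.I) * Complex.exp (-(s : ℂ) * (v : ℂ) * Complex.I)) *
          ((toeplitzA A ^ s).mulVec A) k) * Q k).re) v := by
  have hg : HasDerivAt (fun v : ℝ => ∑ k : Fin n, (-(A k) - 2 * ∑ s ∈ Finset.Icc 1 (n - 1),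
      ((lam : ℂ) * Complex.exp (-(s : ℂ) * (v : ℂ) * Complex.I) +
       (1 - (lam : ℂ)) * Complex.exp (-(s : ℂ) * (w : ℂ) * Complex.I)) *
        ((toeplitzA A ^ s).mulVec A) k) * Q k)
      (∑ k : Fin n, (-(0:ℂ) - 2 * ∑ s ∈ Finset.Icc 1 (n - 1),
        ((lam : ℂ) * ((-(s : ℂ) * Complex.I) * Complex.exp (-(s : ℂ) * (v : ℂ) * Complex.I)) + 0) *
          ((toeplitzA A ^ s).mulVec A) k) * Q k) v := by
    refine HasDerivAt.fun_sum fun k _ => ?_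
    refine HasDerivAt.mul_const ?_ (Q k)
    refine HasDerivAt.sub (hasDerivAt_const _ _).neg ?_
    refine HasDerivAt.const_mul 2 ?_
    refine HasDerivAt.fun_sum fun s _ => ?_
    refine HasDerivAt.mul_const ?_ _
    exact ((hasDerivAt_cexp_v s v).const_mul (lam : ℂ)).add (hasDerivAt_const _ _)
  have h2 : HasDerivAt (fun v => realHamTwo n lam A Q v w)
      (2 * ((∑ k : Fin n, (-(0:ℂ) - 2 * ∑ s ∈ Finset.Icc 1 (n - 1),
        ((lam : ℂ) * ((-(s : ℂ) * Complex.I) * Complex.exp (-(s : ℂ) * (v : ℂ) * Complex.I)) + 0) *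
          ((toeplitzA A ^ s).mulVec A) k) * Q k).re)) v := by
    have h3 := (Complex.reCLM.hasFDerivAt.comp_hasDerivAt v hg).const_mul (2:ℝ)
    simpa [realHamTwo, Function.comp_def] using h3
  convert h2 using 3
  refine Finset.sum_congr rfl fun k _ => ?_
  simp only [add_zero, neg_zero, zero_sub]
  ring

lemma hasDerivAt_H_u₂ (n : ℕ) (lam : ℝ) (A Q : Fin n → ℂ) (v w : ℝ) :
    HasDerivAt (fun w => realHamTwo n lam A Q v w)
      (2 * (∑ k : Fin n, (-(2:ℂ) * ∑ s ∈ Finset.Icc 1 (n - 1),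
        (1 - (lam : ℂ)) * ((-(s : ℂ) * Complex.I) * Complex.exp (-(s : ℂ) * (w : ℂ) * Complex.I)) *
          ((toeplitzA A ^ s).mulVec A) k) * Q k).re) w := by
  have hg : HasDerivAt (fun w : ℝ => ∑ k : Fin n, (-(A k) - 2 * ∑ s ∈ Finset.Icc 1 (n - 1),
      ((lam : ℂ) * Complex.exp (-(s : ℂ) * (v : ℂ) * Complex.I) +
       (1 - (lam : ℂ)) * Complex.exp (-(s : ℂ) * (w : ℂ) * Complex.I)) *
        ((toeplitzA A ^ s).mulVec A) k) * Q k)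
      (∑ k : Fin n, (-(0:ℂ) - 2 * ∑ s ∈ Finset.Icc 1 (n - 1),
        (0 + (1 - (lam : ℂ)) * ((-(s : ℂ) * Complex.I) * Complex.exp (-(s : ℂ) * (w : ℂ) * Complex.I))) *
          ((toeplitzA A ^ s).mulVec A) k) * Q k) w := by
    refine HasDerivAt.fun_sum fun k _ => ?_
    refine HasDerivAt.mul_const ?_ (Q k)
    refine HasDerivAt.sub (hasDerivAt_const _ _).neg ?_
    refine HasDerivAt.const_mul 2 ?_
    refine HasDerivAt.fun_sum fun s _ => ?_
    refine HasDerivAt.mul_const ?_ _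
    exact (hasDerivAt_const _ _).add ((hasDerivAt_cexp_v s w).const_mul (1 - (lam : ℂ)))
  have h2 : HasDerivAt (fun w => realHamTwo n lam A Q v w)
      (2 * ((∑ k : Fin n, (-(0:ℂ) - 2 * ∑ s ∈ Finset.Icc 1 (n - 1),
        (0 + (1 - (lam : ℂ)) * ((-(s : ℂ) * Complex.I) * Complex.exp (-(s : ℂ) * (w : ℂ) * Complex.I))) *
          ((toeplitzA A ^ s).mulVec A) k) * Q k).re)) w := by
    have h3 := (Complex.reCLM.hasFDerivAt.comp_hasDerivAt w hg).const_mul (2:ℝ)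
    simpa [realHamTwo, Function.comp_def] using h3
  convert h2 using 3
  refine Finset.sum_congr rfl fun k _ => ?_
  simp only [zero_add, neg_zero, zero_sub]
  ring

end TwoSlitAux
namespace TwoSlitAux

/-- Total derivative of the Hamiltonian along a trajectory of the phase/adjoint system. -/
lemma keyDeriv (n : ℕ) (lam : ℝ) (I : Set ℝ) (τ : ℝ)
    (u₁ u₂ : ℝ → ℝ) (d₁ d₂ : ℝ)
    (hu₁ : HasDerivWithinAt u₁ d₁ I τ) (hu₂ : HasDerivWithinAt u₂ d₂ I τ)
    (a q : ℝ → Fin n → ℂ)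
    (ha : ∀ k : Fin n,
      HasDerivWithinAt (fun r => a r k)
        (-(a τ k) - 2 * ∑ s ∈ Finset.Icc 1 (n - 1),
          ((lam : ℂ) * Complex.exp (-(s : ℂ) * (u₁ τ : ℂ) * Complex.I) +
           (1 - (lam : ℂ)) * Complex.exp (-(s : ℂ) * (u₂ τ : ℂ) * Complex.I)) *
            ((toeplitzA (a τ) ^ s).mulVec (a τ)) k) I τ)
    (hq : ∀ k : Fin n,
      HasDerivWithinAt (fun r => q r k)
        (q τ k + 2 * ∑ s ∈ Finset.Icc 1 (n - 1),
          ((lam : ℂ) * Complex.exp (-(s : ℂ) * (u₁ τ : ℂ) * Complex.I) +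
           (1 - (lam : ℂ)) * Complex.exp (-(s : ℂ) * (u₂ τ : ℂ) * Complex.I)) * ((s : ℂ) + 1) *
            (((toeplitzA (a τ)).transpose ^ s).mulVec (q τ)) k) I τ) :
    HasDerivWithinAt (fun r => realHamTwo n lam (a r) (q r) (u₁ r) (u₂ r))
      (d₁ * (2 * (∑ k : Fin n, (-(2:ℂ) * ∑ s ∈ Finset.Icc 1 (n - 1),
        (lam : ℂ) * ((-(s : ℂ) * Complex.I) * Complex.exp (-(s : ℂ) * (u₁ τ : ℂ) * Complex.I)) *
          ((toeplitzA (a τ) ^ s).mulVec (a τ)) k) * q τ k).re)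
       + d₂ * (2 * (∑ k : Fin n, (-(2:ℂ) * ∑ s ∈ Finset.Icc 1 (n - 1),
        (1 - (lam : ℂ)) * ((-(s : ℂ) * Complex.I) * Complex.exp (-(s : ℂ) * (u₂ τ : ℂ) * Complex.I)) *
          ((toeplitzA (a τ) ^ s).mulVec (a τ)) k) * q τ k).re)) I τ := by
  classical
  set e₁ : ℕ → ℂ := fun s => Complex.exp (-(s : ℂ) * (u₁ τ : ℂ) * Complex.I) with he₁
  set e₂ : ℕ → ℂ := fun s => Complex.exp (-(s : ℂ) * (u₂ τ : ℂ) * Complex.I) with he₂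
  set c : ℕ → ℂ := fun s => (lam : ℂ) * e₁ s + (1 - (lam : ℂ)) * e₂ s with hc
  set cder : ℕ → ℂ := fun s =>
      (lam : ℂ) * ((d₁ : ℂ) * (-(s : ℂ) * Complex.I) * e₁ s)
    + (1 - (lam : ℂ)) * ((d₂ : ℂ) * (-(s : ℂ) * Complex.I) * e₂ s) with hcder
  set Q : Fin n → ℂ := q τ with hQ
  set M : ℕ → Fin n → ℂ := fun s => (toeplitzA (a τ) ^ s).mulVec (a τ) with hM
  set N : ℕ → Fin n → ℂ := fun s => ((toeplitzA (a τ)).transpose ^ s).mulVec Q with hN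
  set F : Fin n → ℂ := fun k => -(a τ k) - 2 * ∑ s ∈ Finset.Icc 1 (n - 1), c s * M s k with hF
  set G : Fin n → ℂ := fun k =>
      Q k + 2 * ∑ s ∈ Finset.Icc 1 (n - 1), c s * ((s : ℂ) + 1) * N s k with hG
  set P : ℕ → Fin n → ℂ := fun s => (toeplitzA (a τ) ^ s).mulVec F with hP
  have ha' : ∀ k, HasDerivWithinAt (fun r => a r k) (F k) I τ := ha
  have hq' : ∀ k, HasDerivWithinAt (fun r => q r k) (G k) I τ := hq
  -- derivative of the coefficients
  have hcd : ∀ s : ℕ,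
      HasDerivWithinAt (fun r => (lam : ℂ) * Complex.exp (-(s : ℂ) * (u₁ r : ℂ) * Complex.I)
        + (1 - (lam : ℂ)) * Complex.exp (-(s : ℂ) * (u₂ r : ℂ) * Complex.I)) (cder s) I τ :=
    fun s => ((hasDeriv_cexp hu₁ s).const_mul ((lam : ℂ))).add
      ((hasDeriv_cexp hu₂ s).const_mul ((1 - (lam : ℂ))))
  -- derivative of the matrix terms
  have hMd : ∀ s ∈ Finset.Icc 1 (n - 1), ∀ k : Fin n,
      HasDerivWithinAt (fun r => (toeplitzA (a r) ^ s).mulVec (a r) k)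
        (((s : ℂ) + 1) * P s k) I τ := by
    intro s hs k
    obtain ⟨s', rfl⟩ : ∃ m, s = m + 1 := ⟨s - 1, by have := (Finset.mem_Icc.1 hs).1; omega⟩
    have h := hasDeriv_pow_mulVec (f := a) (f' := F) ha' s' k
    convert h using 1
    rw [nsmul_eq_mul]
    push_cast
    rw [hP]
    ring
  -- derivative of the inner complex function
  have hg : HasDerivWithinAt
      (fun r => ∑ k : Fin n, (-(a r k) - 2 * ∑ s ∈ Finset.Icc 1 (n - 1),
        ((lam : ℂ) * Complex.exp (-(s : ℂ) * (u₁ r : ℂ) * Complex.I) +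
         (1 - (lam : ℂ)) * Complex.exp (-(s : ℂ) * (u₂ r : ℂ) * Complex.I)) *
          ((toeplitzA (a r) ^ s).mulVec (a r)) k) * q r k)
      (∑ k : Fin n, ((-(F k) - 2 * ∑ s ∈ Finset.Icc 1 (n - 1),
        (cder s * M s k + c s * (((s : ℂ) + 1) * P s k))) * Q k + F k * G k)) I τ := by
    refine HasDerivWithinAt.fun_sum fun k _ => ?_
    exact ((((ha' k).neg).sub ((HasDerivWithinAt.fun_sum
      fun s hs => (hcd s).mul (hMd s hs k)).const_mul 2))).mul (hq' k)
  -- the cancellation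
  have hXY : ∀ s ∈ Finset.Icc 1 (n - 1),
      (∑ k : Fin n, P s k * Q k) = ∑ k : Fin n, F k * N s k := by
    intro s _
    rw [hP, hN]
    have := sum_mulVec_mul (toeplitzA (a τ) ^ s) F Q
    rw [this, Matrix.transpose_pow]
  have key4 : (∑ k : Fin n, ((-(F k) - 2 * ∑ s ∈ Finset.Icc 1 (n - 1),
        (cder s * M s k + c s * (((s : ℂ) + 1) * P s k))) * Q k + F k * G k))
      = ∑ k : Fin n, (-2 * ∑ s ∈ Finset.Icc 1 (n - 1), cder s * M s k) * Q k := by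
    have step1 : (∑ k : Fin n, ((-(F k) - 2 * ∑ s ∈ Finset.Icc 1 (n - 1),
          (cder s * M s k + c s * (((s : ℂ) + 1) * P s k))) * Q k + F k * G k))
        = ∑ k : Fin n, ((-2 * ∑ s ∈ Finset.Icc 1 (n - 1), cder s * M s k) * Q k
          + ((-2) * ∑ s ∈ Finset.Icc 1 (n - 1), c s * ((s : ℂ) + 1) * (P s k * Q k)
            + 2 * ∑ s ∈ Finset.Icc 1 (n - 1), c s * ((s : ℂ) + 1) * (F k * N s k))) := by
      refine Finset.sum_congr rfl fun k _ => ?_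
      have e2 : (∑ s ∈ Finset.Icc 1 (n - 1), c s * (((s : ℂ) + 1) * P s k)) * Q k
          = ∑ s ∈ Finset.Icc 1 (n - 1), c s * ((s : ℂ) + 1) * (P s k * Q k) := by
        rw [Finset.sum_mul]; exact Finset.sum_congr rfl fun s _ => by ring
      have e3 : F k * (∑ s ∈ Finset.Icc 1 (n - 1), c s * ((s : ℂ) + 1) * N s k)
          = ∑ s ∈ Finset.Icc 1 (n - 1), c s * ((s : ℂ) + 1) * (F k * N s k) := by
        rw [Finset.mul_sum]; exact Finset.sum_congr rfl fun s _ => by ring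
      rw [hG]
      rw [Finset.sum_add_distrib]
      linear_combination (-2 : ℂ) * e2 + 2 * e3
    rw [step1, Finset.sum_add_distrib]
    have hzero : (∑ k : Fin n,
        ((-2 : ℂ) * ∑ s ∈ Finset.Icc 1 (n - 1), c s * ((s : ℂ) + 1) * (P s k * Q k)
          + 2 * ∑ s ∈ Finset.Icc 1 (n - 1), c s * ((s : ℂ) + 1) * (F k * N s k))) = 0 := by
      rw [Finset.sum_add_distrib, ← Finset.mul_sum, ← Finset.mul_sum]
      rw [Finset.sum_comm, Finset.sum_comm (s := Finset.univ)]
      have A1 : ∀ s ∈ Finset.Icc 1 (n-1), (∑ k : Fin n, c s * ((s : ℂ) + 1) * (P s k * Q k))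
          = c s * ((s : ℂ) + 1) * ∑ k : Fin n, P s k * Q k := fun s _ => (Finset.mul_sum _ _ _).symm
      have A2 : ∀ s ∈ Finset.Icc 1 (n-1), (∑ k : Fin n, c s * ((s : ℂ) + 1) * (F k * N s k))
          = c s * ((s : ℂ) + 1) * ∑ k : Fin n, F k * N s k := fun s _ => (Finset.mul_sum _ _ _).symm
      rw [Finset.sum_congr rfl A1, Finset.sum_congr rfl A2]
      have hEq : (∑ s ∈ Finset.Icc 1 (n-1), c s * ((s : ℂ) + 1) * ∑ k : Fin n, P s k * Q k)
          = ∑ s ∈ Finset.Icc 1 (n-1), c s * ((s : ℂ) + 1) * ∑ k : Fin n, F k * N s k :=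
        Finset.sum_congr rfl fun s hs => by rw [hXY s hs]
      rw [hEq]; ring
    rw [hzero, add_zero]
  rw [key4] at hg
  -- pass to the real part
  have hre := (Complex.reCLM.hasFDerivAt.comp_hasDerivWithinAt τ hg).const_mul (2 : ℝ)
  have hfun : (fun r => (2:ℝ) * (Complex.reCLM ∘ fun r => ∑ k : Fin n,
      (-(a r k) - 2 * ∑ s ∈ Finset.Icc 1 (n - 1),
        ((lam : ℂ) * Complex.exp (-(s : ℂ) * (u₁ r : ℂ) * Complex.I) +
         (1 - (lam : ℂ)) * Complex.exp (-(s : ℂ) * (u₂ r : ℂ) * Complex.I)) *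
          ((toeplitzA (a r) ^ s).mulVec (a r)) k) * q r k) r)
      = fun r => realHamTwo n lam (a r) (q r) (u₁ r) (u₂ r) := by
    funext r
    simp [realHamTwo, Function.comp_def]
  rw [hfun] at hre
  refine hre.congr_deriv (Eq.symm ?_)
  -- identify the derivative value
  have hVsplit : (∑ k : Fin n, (-2 * ∑ s ∈ Finset.Icc 1 (n - 1), cder s * M s k) * Q k)
      = (d₁ : ℂ) * (∑ k : Fin n, (-(2:ℂ) * ∑ s ∈ Finset.Icc 1 (n - 1),
          (lam : ℂ) * ((-(s : ℂ) * Complex.I) * e₁ s) * M s k) * Q k)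
        + (d₂ : ℂ) * (∑ k : Fin n, (-(2:ℂ) * ∑ s ∈ Finset.Icc 1 (n - 1),
          (1 - (lam : ℂ)) * ((-(s : ℂ) * Complex.I) * e₂ s) * M s k) * Q k) := by
    rw [Finset.mul_sum, Finset.mul_sum, ← Finset.sum_add_distrib]
    refine Finset.sum_congr rfl fun k _ => ?_
    have inner : (∑ s ∈ Finset.Icc 1 (n - 1), cder s * M s k)
        = (d₁ : ℂ) * (∑ s ∈ Finset.Icc 1 (n - 1), (lam : ℂ) * ((-(s : ℂ) * Complex.I) * e₁ s) * M s k)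
          + (d₂ : ℂ) * (∑ s ∈ Finset.Icc 1 (n - 1), (1 - (lam : ℂ)) * ((-(s : ℂ) * Complex.I) * e₂ s) * M s k) := by
      rw [Finset.mul_sum, Finset.mul_sum, ← Finset.sum_add_distrib]
      refine Finset.sum_congr rfl fun s _ => ?_
      rw [hcder]
      ring
    rw [inner]
    ring
  show _ = (2:ℝ) * Complex.reCLM _
  rw [hVsplit]
  simp only [Complex.reCLM_apply, Complex.add_re, Complex.re_ofReal_mul]
  ring

end TwoSlitAux

/-- along a trajectory of the two-slit phase/adjoint system on which both
criticality conditions `∂H̃/∂u₁ = ∂H̃/∂u₂ = 0` hold, `H̃(a(t),q(t),u₁(t),u₂(t))` is constant. -/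
theorem two_slit_hamiltonian_constant_along_critical_trajectory
    (n : ℕ) (hn : 1 ≤ n) (lam : ℝ) (I : Set ℝ) (hI : Convex ℝ I)
    (u₁ u₂ : ℝ → ℝ)
    (hu₁ : ∀ t ∈ I, DifferentiableWithinAt ℝ u₁ I t)
    (hu₂ : ∀ t ∈ I, DifferentiableWithinAt ℝ u₂ I t)
    (a q : ℝ → Fin n → ℂ)
    (ha : ∀ t ∈ I, ∀ k : Fin n,
      HasDerivWithinAt (fun s => a s k)
        (-(a t k) - 2 * ∑ s ∈ Finset.Icc 1 (n - 1),
          ((lam : ℂ) * Complex.exp (-(s : ℂ) * (u₁ t : ℂ) * Complex.I) +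
           (1 - (lam : ℂ)) * Complex.exp (-(s : ℂ) * (u₂ t : ℂ) * Complex.I)) *
            ((toeplitzA (a t) ^ s).mulVec (a t)) k) I t)
    (hq : ∀ t ∈ I, ∀ k : Fin n,
      HasDerivWithinAt (fun s => q s k)
        (q t k + 2 * ∑ s ∈ Finset.Icc 1 (n - 1),
          ((lam : ℂ) * Complex.exp (-(s : ℂ) * (u₁ t : ℂ) * Complex.I) +
           (1 - (lam : ℂ)) * Complex.exp (-(s : ℂ) * (u₂ t : ℂ) * Complex.I)) * ((s : ℂ) + 1) *
            (((toeplitzA (a t)).transpose ^ s).mulVec (q t)) k) I t)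
    (hcrit₁ : ∀ t ∈ I, deriv (fun v => realHamTwo n lam (a t) (q t) v (u₂ t)) (u₁ t) = 0)
    (hcrit₂ : ∀ t ∈ I, deriv (fun v => realHamTwo n lam (a t) (q t) (u₁ t) v) (u₂ t) = 0) :
    ∀ t ∈ I, ∀ t' ∈ I,
      realHamTwo n lam (a t) (q t) (u₁ t) (u₂ t)
        = realHamTwo n lam (a t') (q t') (u₁ t') (u₂ t') := by
  intro t ht t' ht'
  have hderiv0 : ∀ τ ∈ I, HasDerivWithinAt
      (fun r => realHamTwo n lam (a r) (q r) (u₁ r) (u₂ r)) ((fun _ => (0:ℝ)) τ) I τ := by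
    intro τ hτ
    have h1 := (hu₁ τ hτ).hasDerivWithinAt
    have h2 := (hu₂ τ hτ).hasDerivWithinAt
    have hkey := TwoSlitAux.keyDeriv n lam I τ u₁ u₂ _ _ h1 h2 a q (ha τ hτ) (hq τ hτ)
    have hD₁ : (2 * (∑ k : Fin n, (-(2:ℂ) * ∑ s ∈ Finset.Icc 1 (n - 1),
        (lam : ℂ) * ((-(s : ℂ) * Complex.I) * Complex.exp (-(s : ℂ) * (u₁ τ : ℂ) * Complex.I)) *
          ((toeplitzA (a τ) ^ s).mulVec (a τ)) k) * q τ k).re) = 0 := by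
      rw [← (TwoSlitAux.hasDerivAt_H_u₁ n lam (a τ) (q τ) (u₁ τ) (u₂ τ)).deriv]
      exact hcrit₁ τ hτ
    have hD₂ : (2 * (∑ k : Fin n, (-(2:ℂ) * ∑ s ∈ Finset.Icc 1 (n - 1),
        (1 - (lam : ℂ)) * ((-(s : ℂ) * Complex.I) * Complex.exp (-(s : ℂ) * (u₂ τ : ℂ) * Complex.I)) *
          ((toeplitzA (a τ) ^ s).mulVec (a τ)) k) * q τ k).re) = 0 := by
      rw [← (TwoSlitAux.hasDerivAt_H_u₂ n lam (a τ) (q τ) (u₁ τ) (u₂ τ)).deriv]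
      exact hcrit₂ τ hτ
    rw [hD₁, hD₂] at hkey
    simpa using hkey
  have hle := hI.norm_image_sub_le_of_norm_hasDerivWithin_le (C := 0) (f' := fun _ => (0:ℝ))
    hderiv0 (fun x _ => by simp) ht' ht
  rw [zero_mul] at hle
  exact sub_eq_zero.1 (norm_le_zero_iff.1 hle)
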